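/- There are exactly 2^{n-2} tuples (a_1,...,a_n) of even length n ≥ 4 over Z/4Z with all entries in {0, 2} satisfying M_n(a_1,...,a_n) = ±Id. -/

import Mathlib

open Matrix

/-- `Mlist [a₁,…,aₙ] = M(aₙ)⋯M(a₁)` where `M(a) = [[a,-1],[1,0]]`. -/
def Mlist {A : Type*} [CommRing A] (l : List A) : Matrix (Fin 2) (Fin 2) A :=
  ((l.map (fun a => !![a, -1; 1, 0])).reverse).prod

/-- The continuant `K` (tridiagonal determinant), with `K [] = 1`. -/
def cont {A : Type*} [CommRing A] : List A → A
  | [] => 1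
  | [a] => a
  | a :: b :: l => a * cont (b :: l) - cont l

/-- `(a₁,…,aₙ) ⊕ (b₁,…,bₘ) = (a₁+bₘ, a₂,…,aₙ₋₁, aₙ+b₁, b₂,…,bₘ₋₁)` (for lists of length ≥ 2). -/
def oplus {A : Type*} [CommRing A] (la lb : List A) : List A :=
  match la, lb with
  | a1 :: ta, b1 :: tb =>
      (a1 + tb.getLastD b1) :: (ta.dropLast ++ ((ta.getLastD a1 + b1) :: tb.dropLast))
  | _, _ => []

def Jm : Matrix (Fin 2) (Fin 2) (ZMod 4) := !![0, -1; 1, 0]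

def st : List (ZMod 4) → ZMod 4 × ZMod 4
  | [] => (0, 0)
  | a :: l => (a + (st l).2, (st l).1)

lemma mlist_nil : Mlist ([] : List (ZMod 4)) = 1 := by simp [Mlist]

lemma mlist_cons (a : ZMod 4) (l : List (ZMod 4)) :
    Mlist (a :: l) = Mlist l * !![a, -1; 1, 0] := by
  simp [Mlist]

lemma st_tor (l : List (ZMod 4)) (h : ∀ x ∈ l, x = 0 ∨ x = 2) :
    2 * (st l).1 = 0 ∧ 2 * (st l).2 = 0 := by
  induction l with
  | nil => decide
  | cons a l ih =>
    have ha := h a List.mem_cons_self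
    have ih' := ih (fun x hx => h x (List.mem_cons_of_mem _ hx))
    have h2a : 2 * a = 0 := by rcases ha with rfl | rfl <;> decide
    refine ⟨?_, ih'.1⟩
    show 2 * (a + (st l).2) = 0
    rw [mul_add, h2a, ih'.2, add_zero]

lemma mlist_eq (l : List (ZMod 4)) (h : ∀ x ∈ l, x = 0 ∨ x = 2) :
    Mlist l = Jm ^ l.length * !![1, (st l).2; (st l).1, 1] := by
  induction l with
  | nil => simp [mlist_nil, st]; decide
  | cons a l ih =>
    have ha := h a List.mem_cons_self
    have h' : ∀ x ∈ l, x = 0 ∨ x = 2 := fun x hx => h x (List.mem_cons_of_mem _ hx)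
    obtain ⟨hs, ht⟩ := st_tor l h'
    have h2a : 2 * a = 0 := by rcases ha with rfl | rfl <;> decide
    have hsa : (st l).1 * a = 0 := by
      rcases ha with rfl | rfl
      · ring
      · rw [mul_comm]; exact hs
    rw [mlist_cons, ih h']
    have key : !![1, (st l).2; (st l).1, 1] * !![a, -1; 1, 0]
        = Jm * !![1, (st l).1; a + (st l).2, 1] := by
      ext i j
      fin_cases i <;> fin_cases j <;>
        simp [Jm, Matrix.mul_apply, Fin.sum_univ_two]
      · linear_combination h2a + ht
      · exact hsa
      · linear_combination -hs
    show _ = Jm ^ (l.length + 1) * _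
    rw [mul_assoc, key, pow_succ, mul_assoc]
    rfl

lemma jpow_even (n : ℕ) (he : Even n) : Jm ^ n = 1 ∨ Jm ^ n = -1 := by
  obtain ⟨k, rfl⟩ := he
  have h2 : Jm ^ 2 = -1 := by decide
  have : Jm ^ (k + k) = (-1 : Matrix (Fin 2) (Fin 2) (ZMod 4)) ^ k := by
    rw [← two_mul, pow_mul, h2]
  rw [this]
  rcases Nat.even_or_odd k with hk | hk
  · left; exact hk.neg_one_pow
  · right; exact hk.neg_one_pow

lemma helper1 (s t : ZMod 4) :
    (!![1, t; s, 1] = (1 : Matrix (Fin 2) (Fin 2) (ZMod 4)) ∨ !![1, t; s, 1] = -1) ↔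
      (s = 0 ∧ t = 0) := by revert s t; decide

lemma helper2 (s t : ZMod 4) :
    (-(!![1, t; s, 1]) = (1 : Matrix (Fin 2) (Fin 2) (ZMod 4)) ∨ -(!![1, t; s, 1]) = -1) ↔
      (s = 0 ∧ t = 0) := by revert s t; decide

lemma cond_iff (n : ℕ) (he : Even n) (a : Fin n → ZMod 4) (ha : ∀ i, a i = 0 ∨ a i = 2) :
    (Mlist (List.ofFn a) = 1 ∨ Mlist (List.ofFn a) = -1) ↔ st (List.ofFn a) = (0, 0) := by
  have hmem : ∀ x ∈ List.ofFn a, x = 0 ∨ x = 2 := by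
    intro x hx
    obtain ⟨i, rfl⟩ := (List.mem_ofFn).1 hx
    exact ha i
  have heq := mlist_eq _ hmem
  rw [List.length_ofFn] at heq
  rw [Prod.ext_iff]
  rcases jpow_even n he with hJ | hJ <;> rw [heq, hJ]
  · rw [one_mul]; exact helper1 _ _
  · rw [neg_one_mul]; exact helper2 _ _

lemma st_ofFn : ∀ (n : ℕ) (f : Fin n → ZMod 4),
    st (List.ofFn f) = (∑ i : Fin n, if Even i.val then f i else 0,
                        ∑ i : Fin n, if Odd i.val then f i else 0) := by
  intro n
  induction n with
  | zero => intro f; simp [st, List.ofFn_zero]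
  | succ n ih =>
    intro f
    rw [List.ofFn_succ]
    show (f 0 + (st (List.ofFn fun i => f i.succ)).2,
          (st (List.ofFn fun i => f i.succ)).1) = _
    rw [ih]
    refine Prod.ext ?_ ?_
    · show f 0 + (∑ i : Fin n, if Odd i.val then f i.succ else 0)
          = ∑ i : Fin (n + 1), if Even i.val then f i else 0
      rw [Fin.sum_univ_succ]
      simp only [Fin.val_zero, Fin.val_succ]
      simp only [show Even 0 from by decide, ↓reduceIte]
      congr 1
      refine Finset.sum_congr rfl fun i _ => ?_
      simp only [Nat.even_add_one, Nat.not_even_iff_odd]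
    · show (∑ i : Fin n, if Even i.val then f i.succ else 0)
          = ∑ i : Fin (n + 1), if Odd i.val then f i else 0
      rw [Fin.sum_univ_succ]
      simp only [Fin.val_zero, Fin.val_succ]
      simp only [show ¬ Odd 0 from by decide, ↓reduceIte, zero_add]
      refine Finset.sum_congr rfl fun i _ => ?_
      simp only [Nat.odd_add_one, Nat.not_odd_iff_even]

def e24 : ZMod 2 →+ ZMod 4 where
  toFun x := 2 * x.val
  map_zero' := by decide
  map_add' := by decide

noncomputable def psi (n : ℕ) : (Fin n → ZMod 2) →+ ZMod 2 × ZMod 2 :=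
  AddMonoidHom.mk'
    (fun b => (∑ i : Fin n, if Even i.val then b i else 0,
               ∑ i : Fin n, if Odd i.val then b i else 0))
    (by
      intro x y
      simp only [Prod.mk_add_mk, Prod.mk.injEq, ← Finset.sum_add_distrib]
      constructor <;>
        exact Finset.sum_congr rfl fun i _ => by
          split_ifs <;> simp)

lemma st_ofFn_e (n : ℕ) (b : Fin n → ZMod 2) :
    st (List.ofFn fun i => e24 (b i)) = (e24 ((psi n) b).1, e24 ((psi n) b).2) := by
  rw [st_ofFn]
  simp [psi, map_sum, apply_ite e24]

lemma psi_surj (n : ℕ) (hn : 2 ≤ n) : Function.Surjective (psi n) := by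
  rintro ⟨x, y⟩
  refine ⟨fun i => if i.val = 0 then x else if i.val = 1 then y else 0, ?_⟩
  show (_, _) = (x, y)
  refine Prod.ext ?_ ?_
  · show (∑ i : Fin n, if Even i.val then _ else 0) = x
    rw [Finset.sum_eq_single (⟨0, by omega⟩ : Fin n)]
    · simp
    · intro j _ hj
      have hj0 : j.val ≠ 0 := fun h => hj (Fin.ext h)
      by_cases hE : Even j.val
      · have hj1 : j.val ≠ 1 := by
          intro h; rw [h] at hE; exact (Nat.not_even_one) hE
        rw [if_pos hE, if_neg hj0, if_neg hj1]
      · rw [if_neg hE]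
    · intro h; exact absurd (Finset.mem_univ _) h
  · show (∑ i : Fin n, if Odd i.val then _ else 0) = y
    rw [Finset.sum_eq_single (⟨1, by omega⟩ : Fin n)]
    · simp [Nat.odd_iff]
    · intro j _ hj
      have hj1 : j.val ≠ 1 := fun h => hj (Fin.ext h)
      by_cases hO : Odd j.val
      · have hj0 : j.val ≠ 0 := by
          intro h; rw [h] at hO; simp [Nat.odd_iff] at hO
        rw [if_pos hO, if_neg hj0, if_neg hj1]
      · rw [if_neg hO]
    · intro h; exact absurd (Finset.mem_univ _) h

lemma card_ker (n : ℕ) (hn : 2 ≤ n) : Nat.card (psi n).ker = 2 ^ (n - 2) := by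
  have hsurj := psi_surj n hn
  have e1 := QuotientAddGroup.quotientKerEquivOfSurjective _ hsurj
  have h1 := AddSubgroup.card_eq_card_quotient_mul_card_addSubgroup (psi n).ker
  rw [Nat.card_congr e1.toEquiv] at h1
  have h2 : Nat.card (Fin n → ZMod 2) = 2 ^ n := by
    simp [Nat.card_eq_fintype_card]
  have h3 : Nat.card (ZMod 2 × ZMod 2) = 4 := by
    simp [Nat.card_eq_fintype_card]
  rw [h2, h3] at h1
  have h4 : 2 ^ n = 4 * 2 ^ (n - 2) := by
    have := pow_add 2 2 (n - 2)
    rw [Nat.add_sub_cancel' hn] at this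
    simpa using this
  omega

lemma e24_range : ∀ y : ZMod 2, e24 y = 0 ∨ e24 y = 2 := by decide

lemma e24_round : ∀ y : ZMod 2, (if e24 y = 0 then (0 : ZMod 2) else 1) = y := by decide

lemma e24_sect : ∀ x : ZMod 4, (x = 0 ∨ x = 2) →
    e24 (if x = 0 then (0 : ZMod 2) else 1) = x := by decide

lemma corr (n : ℕ) (he : Even n) (b : Fin n → ZMod 2) :
    b ∈ (psi n).ker ↔
      ((∀ i, e24 (b i) = 0 ∨ e24 (b i) = 2) ∧
        (Mlist (List.ofFn fun i => e24 (b i)) = 1 ∨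
          Mlist (List.ofFn fun i => e24 (b i)) = -1)) := by
  have hinj : ∀ y : ZMod 2, e24 y = 0 ↔ y = 0 := by decide
  rw [AddMonoidHom.mem_ker]
  constructor
  · intro h
    refine ⟨fun i => e24_range _, ?_⟩
    rw [cond_iff n he _ (fun i => e24_range _), st_ofFn_e, h]
    simp
  · rintro ⟨-, hM⟩
    rw [cond_iff n he _ (fun i => e24_range _), st_ofFn_e, Prod.ext_iff] at hM
    refine Prod.ext ?_ ?_
    · exact (hinj _).1 hM.1
    · exact (hinj _).1 hM.2

theorem stmt13 (n : ℕ) (hn : 4 ≤ n) (he : Even n) :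
    Nat.card {a : Fin n → ZMod 4 //
      (∀ i, a i = 0 ∨ a i = 2) ∧
      (Mlist (List.ofFn a) = 1 ∨ Mlist (List.ofFn a) = -1)} = 2 ^ (n - 2) := by
  classical
  have hn2 : 2 ≤ n := by omega
  rw [← card_ker n hn2]
  refine (Nat.card_congr ?_).symm
  exact
    { toFun := fun b => ⟨fun i => e24 (b.1 i), (corr n he b.1).1 b.2⟩
      invFun := fun a =>
        ⟨fun i => if a.1 i = 0 then (0 : ZMod 2) else 1, by
          refine (corr n he _).2 ⟨fun i => e24_range _, ?_⟩
          have hl : (List.ofFn fun i => e24 (if a.1 i = 0 then (0 : ZMod 2) else 1))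
              = List.ofFn a.1 := by
            congr 1
            funext i
            exact e24_sect _ (a.2.1 i)
          rw [hl]
          exact a.2.2⟩
      left_inv := fun b => Subtype.ext (funext fun i => e24_round (b.1 i))
      right_inv := fun a => Subtype.ext (funext fun i => e24_sect _ (a.2.1 i)) }
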